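/- Let E be a finite-dimensional real inner product space, let L : ℝ → [0,∞) and ρ : ℝ → [0,∞) be continuous, and let a : ℝ × E → E satisfy ‖a(t,y₁) − a(t,y₂)‖ ≤ L(t)·‖y₁ − y₂‖ for all t and all y₁, y₂ ∈ E. Let y : [0,T] → E be differentiable with ‖y'(t) − a(t, y(t))‖ ≤ ρ(t) for all t ∈ [0,T]. Fix τ ∈ [0,T] and let z : [0,τ] → E be differentiable with z'(t) = a(t, z(t)) for all t ∈ [0,τ] and z(τ) = y(τ). Then ‖z(0) − y(0)‖ ≤ exp(2·∫_0^τ L(s) ds) · ∫_0^τ ρ(s) ds. -/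

import Mathlib

open Filter Topology

/-- Finite-dimensional core of Proposition 3 ('dop') of the paper: if `y` is a
`ρ`-approximate solution of `y' = a(t,y)` on `[0,T]` with `a(t,·)` being
`L(t)`-Lipschitz, and `z` is the exact solution on `[0,τ]` with `z(τ) = y(τ)`, then
`‖z(0) − y(0)‖ ≤ exp(2∫_0^τ L) · ∫_0^τ ρ`. -/
theorem stmt_6 {E : Type*} [NormedAddCommGroup E] [InnerProductSpace ℝ E]
    [FiniteDimensional ℝ E]
    (L ρ : ℝ → ℝ) (hLc : Continuous L) (hρc : Continuous ρ)
    (hL0 : ∀ t, 0 ≤ L t) (hρ0 : ∀ t, 0 ≤ ρ t)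
    (a : ℝ → E → E)
    (hLip : ∀ (t : ℝ) (y₁ y₂ : E), ‖a t y₁ - a t y₂‖ ≤ L t * ‖y₁ - y₂‖)
    (T : ℝ) (hT : 0 ≤ T)
    (y : ℝ → E)
    (hy : ∀ t ∈ Set.Icc (0:ℝ) T, ∃ v : E,
      HasDerivWithinAt y v (Set.Icc 0 T) t ∧ ‖v - a t (y t)‖ ≤ ρ t)
    (τ : ℝ) (hτ : τ ∈ Set.Icc (0:ℝ) T)
    (z : ℝ → E)
    (hz : ∀ t ∈ Set.Icc (0:ℝ) τ,
      HasDerivWithinAt z (a t (z t)) (Set.Icc 0 τ) t)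
    (hzτ : z τ = y τ) :
    ‖z 0 - y 0‖ ≤ Real.exp (2 * ∫ s in (0:ℝ)..τ, L s) * ∫ s in (0:ℝ)..τ, ρ s := by
  obtain ⟨hτ0, hτT⟩ := hτ
  choose! v hv hvb using hy
  have hsub : Set.Icc (0:ℝ) τ ⊆ Set.Icc 0 T := Set.Icc_subset_Icc le_rfl hτT
  -- continuity of reversed coefficients
  have hLt : Continuous fun s : ℝ => L (τ - s) := hLc.comp (continuous_const.sub continuous_id)
  have hρt : Continuous fun s : ℝ => ρ (τ - s) := hρc.comp (continuous_const.sub continuous_id)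
  set Φ : ℝ → ℝ := fun s => ∫ σ in (0:ℝ)..s, L (τ - σ) with hΦdef
  have hΦ : ∀ s, HasDerivAt Φ (L (τ - s)) s := fun s =>
    (hLt.integral_hasStrictDerivAt 0 s).hasDerivAt
  have hΦc : Continuous Φ := by
    refine continuous_iff_continuousAt.2 fun s => (hΦ s).continuousAt
  set Λ : ℝ := ∫ s in (0:ℝ)..τ, L s with hΛdef
  set R : ℝ := ∫ s in (0:ℝ)..τ, ρ s with hRdef
  have hΛ0 : 0 ≤ Λ := intervalIntegral.integral_nonneg hτ0 fun s _ => hL0 s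
  have hR0 : 0 ≤ R := intervalIntegral.integral_nonneg hτ0 fun s _ => hρ0 s
  have hΦτ : Φ τ = Λ := by
    show (∫ σ in (0:ℝ)..τ, L (τ - σ)) = Λ
    rw [intervalIntegral.integral_comp_sub_left L τ]
    simp [hΛdef]
  have hΦnn : ∀ σ ∈ Set.Icc (0:ℝ) τ, 0 ≤ Φ σ := fun σ hσ =>
    intervalIntegral.integral_nonneg hσ.1 fun u _ => hL0 _
  -- the reversed difference function
  set f : ℝ → E := fun s => z (τ - s) - y (τ - s) with hfdef
  set f' : ℝ → E := fun s => v (τ - s) - a (τ - s) (z (τ - s)) with hf'def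
  have hmaps : Set.MapsTo (fun s : ℝ => τ - s) (Set.Icc 0 τ) (Set.Icc 0 τ) := by
    intro s hs
    simp only [Set.mem_Icc] at hs ⊢
    constructor <;> linarith [hs.1, hs.2]
  have hfderiv : ∀ s ∈ Set.Icc (0:ℝ) τ, HasDerivWithinAt f (f' s) (Set.Icc 0 τ) s := by
    intro s hs
    have hts : τ - s ∈ Set.Icc (0:ℝ) τ := hmaps hs
    have hw : HasDerivWithinAt (fun t => z t - y t)
        (a (τ - s) (z (τ - s)) - v (τ - s)) (Set.Icc 0 τ) (τ - s) :=
      (hz _ hts).sub (((hv _ (hsub hts))).mono hsub)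
    have hr : HasDerivWithinAt (fun u : ℝ => τ - u) (-1 : ℝ) (Set.Icc 0 τ) s :=
      ((hasDerivAt_id s).const_sub τ).hasDerivWithinAt
    have := HasDerivWithinAt.scomp s hw hr hmaps
    have heq : ((-1 : ℝ) • (a (τ - s) (z (τ - s)) - v (τ - s))) = f' s := by
      rw [hf'def]; simp [neg_sub]
    rw [heq] at this
    exact this
  have hfc : ContinuousOn f (Set.Icc 0 τ) := fun s hs => (hfderiv s hs).continuousWithinAt
  have hf'Ici : ∀ s ∈ Set.Ico (0:ℝ) τ, HasDerivWithinAt f (f' s) (Set.Ici s) s := fun s hs =>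
    (hfderiv s (Set.Ico_subset_Icc_self hs)).mono_of_mem_nhdsWithin
      (Icc_mem_nhdsGE_of_mem hs)
  -- key estimate with ε-perturbed Gronwall bound
  set C : ℝ := Real.exp Λ * (1 + τ) with hCdef
  have key : ∀ ε > (0:ℝ), ‖z 0 - y 0‖ ≤ Real.exp Λ * R + ε * C := by
    intro ε hε
    set ψ : ℝ → ℝ := fun s => Real.exp (-(Φ s)) * (ρ (τ - s) + ε) with hψdef
    have hψc : Continuous ψ := ((hΦc.neg).rexp).mul (hρt.add continuous_const)
    set g : ℝ → ℝ := fun s => ∫ σ in (0:ℝ)..s, ψ σ with hgdef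
    have hg : ∀ s, HasDerivAt g (ψ s) s := fun s =>
      (hψc.integral_hasStrictDerivAt 0 s).hasDerivAt
    set B : ℝ → ℝ := fun s => Real.exp (Φ s) * (ε + g s) with hBdef
    set B' : ℝ → ℝ := fun s => L (τ - s) * B s + (ρ (τ - s) + ε) with hB'def
    have hB : ∀ s, HasDerivAt B (B' s) s := by
      intro s
      have h1 : HasDerivAt (fun u => Real.exp (Φ u)) (Real.exp (Φ s) * L (τ - s)) s :=
        (hΦ s).exp
      have h2 : HasDerivAt (fun u => ε + g u) (ψ s) s := (hg s).const_add ε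
      have h3 := h1.mul h2
      have heq : Real.exp (Φ s) * L (τ - s) * (ε + g s) + Real.exp (Φ s) * ψ s = B' s := by
        rw [hB'def, hψdef, hBdef]
        have : Real.exp (Φ s) * (Real.exp (-(Φ s)) * (ρ (τ - s) + ε))
            = ρ (τ - s) + ε := by
          rw [← mul_assoc, ← Real.exp_add, add_neg_cancel, Real.exp_zero, one_mul]
        simp only
        rw [this]; ring
      rw [heq] at h3
      exact h3
    have hfa : ‖f 0‖ ≤ B 0 := by
      have : f 0 = 0 := by simp [hfdef, hzτ]
      rw [this, hBdef]
      simp [hgdef, Φ, hε.le]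
    have bound : ∀ s ∈ Set.Ico (0:ℝ) τ, ‖f s‖ = B s → ‖f' s‖ < B' s := by
      intro s hs hfB
      set t : ℝ := τ - s with htdef
      have htm : t ∈ Set.Icc (0:ℝ) T := hsub (hmaps (Set.Ico_subset_Icc_self hs))
      have heq : f' s = (v t - a t (y t)) + (a t (y t) - a t (z t)) :=
        (sub_add_sub_cancel (v t) (a t (y t)) (a t (z t))).symm
      have h1 : ‖f' s‖ ≤ ‖a t (z t) - a t (y t)‖ + ‖v t - a t (y t)‖ := by
        calc ‖f' s‖ = ‖(v t - a t (y t)) + (a t (y t) - a t (z t))‖ := by rw [heq]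
          _ ≤ ‖v t - a t (y t)‖ + ‖a t (y t) - a t (z t)‖ := norm_add_le _ _
          _ = ‖a t (z t) - a t (y t)‖ + ‖v t - a t (y t)‖ := by
              rw [norm_sub_rev (a t (y t))]; ring
      have h2 : ‖a t (z t) - a t (y t)‖ ≤ L t * ‖f s‖ := by
        have := hLip t (z t) (y t)
        simpa [hfdef] using this
      have h3 : ‖v t - a t (y t)‖ ≤ ρ t := hvb t htm
      have h4 : ‖f' s‖ ≤ L t * B s + ρ t := by
        rw [← hfB]; linarith
      have h5 : L t * B s + ρ t < B' s := by
        rw [hB'def]; simp only; linarith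
      linarith
    have hmain := image_norm_le_of_norm_deriv_right_lt_deriv_boundary hfc hf'Ici hfa hB bound
        (Set.right_mem_Icc.2 hτ0)
    have hfτ : f τ = z 0 - y 0 := by simp [hfdef]
    rw [hfτ] at hmain
    -- estimate B τ
    have hψle : ∀ σ ∈ Set.Icc (0:ℝ) τ, ψ σ ≤ ρ (τ - σ) + ε := by
      intro σ hσ
      have h1 : Real.exp (-(Φ σ)) ≤ 1 := Real.exp_le_one_iff.2 (neg_nonpos.2 (hΦnn σ hσ))
      have h2 : 0 ≤ ρ (τ - σ) + ε := add_nonneg (hρ0 _) hε.le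
      calc ψ σ ≤ 1 * (ρ (τ - σ) + ε) := mul_le_mul_of_nonneg_right h1 h2
        _ = ρ (τ - σ) + ε := one_mul _
    have hint : g τ ≤ R + ε * τ := by
      have hi1 : IntervalIntegrable ψ MeasureTheory.volume 0 τ := hψc.intervalIntegrable _ _
      have hi2 : IntervalIntegrable (fun σ => ρ (τ - σ) + ε) MeasureTheory.volume 0 τ :=
        (hρt.add continuous_const).intervalIntegrable _ _
      have := intervalIntegral.integral_mono_on hτ0 hi1 hi2 hψle
      have heq : (∫ σ in (0:ℝ)..τ, (ρ (τ - σ) + ε)) = R + ε * τ := by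
        rw [intervalIntegral.integral_add (hρt.intervalIntegrable _ _)
          (intervalIntegrable_const)]
        rw [intervalIntegral.integral_comp_sub_left ρ τ]
        simp [hRdef, mul_comm]
      rw [heq] at this
      exact this
    have hBτ : B τ ≤ Real.exp Λ * R + ε * C := by
      rw [hBdef, hCdef]
      simp only
      rw [hΦτ]
      have h0 : (0:ℝ) < Real.exp Λ := Real.exp_pos _
      nlinarith [hint, h0]
    linarith
  -- pass to the limit ε → 0⁺
  have hlim : ‖z 0 - y 0‖ ≤ Real.exp Λ * R := by
    have htend : Tendsto (fun ε : ℝ => Real.exp Λ * R + ε * C) (𝓝[>] 0)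
        (𝓝 (Real.exp Λ * R + 0 * C)) := by
      apply Tendsto.mono_left _ nhdsWithin_le_nhds
      exact (tendsto_const_nhds.add ((continuous_id.mul continuous_const).tendsto 0))
    rw [zero_mul, add_zero] at htend
    refine ge_of_tendsto htend ?_
    filter_upwards [self_mem_nhdsWithin] with ε hε
    exact key ε hε
  calc ‖z 0 - y 0‖ ≤ Real.exp Λ * R := hlim
    _ ≤ Real.exp (2 * Λ) * R := by
        apply mul_le_mul_of_nonneg_right _ hR0
        exact Real.exp_le_exp.2 (by linarith)
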